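/- Let V ⊂ ℂ be open, let φ and ψ be analytic on V, let μ > 0 and k > 1 be real, and set κ := 2μ/(k − 1). Define real functions u₁, u₂ on V (viewed as a subset of ℝ²) by u₁(z) + i·u₂(z) = (1/(2μ))( k·φ(z) − z·conj(φ′(z)) − conj(ψ(z)) ). Then u = (u₁, u₂) solves the Lamé system with shear modulus μ and bulk modulus κ: for j = 1, 2, μ·Δu_j + κ·∂_j(∂₁u₁ + ∂₂u₂) = 0 on V. -/

import Mathlib

open Complex ComplexConjugate Set

/-- The partial derivative of a real-valued function on `ℂ ≅ ℝ²` in the direction `v`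
(so `pd 1 f = ∂f/∂x₁` and `pd Complex.I f = ∂f/∂x₂`). -/
noncomputable def pd (v : ℂ) (f : ℂ → ℝ) : ℂ → ℝ :=
  fun z => fderiv ℝ f z v

lemma pd_congrOn {V : Set ℂ} (hV : IsOpen V) {f g : ℂ → ℝ} (h : ∀ w ∈ V, f w = g w)
    {z : ℂ} (hz : z ∈ V) (v : ℂ) : pd v f z = pd v g z := by
  unfold pd
  rw [Filter.EventuallyEq.fderiv_eq (Filter.eventuallyEq_of_mem (hV.mem_nhds hz) h)]

lemma pd_shapeRe {f g h : ℂ → ℂ} {f' g' h' : ℂ} (z v : ℂ)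
    (hf : HasDerivAt f f' z) (hg : HasDerivAt g g' z) (hh : HasDerivAt h h' z) :
    pd v (fun w => (f w + w * conj (g w) + conj (h w)).re) z
      = (f' * v + v * conj (g z) + z * conj (g' * v) + conj (h' * v)).re := by
  have Hf : HasFDerivAt f ((ContinuousLinearMap.smulRight (1 : ℂ →L[ℂ] ℂ) f').restrictScalars ℝ) z :=
    (hf.hasFDerivAt).restrictScalars ℝ
  have Hg : HasFDerivAt g ((ContinuousLinearMap.smulRight (1 : ℂ →L[ℂ] ℂ) g').restrictScalars ℝ) z :=
    (hg.hasFDerivAt).restrictScalars ℝ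
  have Hh : HasFDerivAt h ((ContinuousLinearMap.smulRight (1 : ℂ →L[ℂ] ℂ) h').restrictScalars ℝ) z :=
    (hh.hasFDerivAt).restrictScalars ℝ
  have Hcg : HasFDerivAt (fun w => conj (g w))
      (Complex.conjCLE.toContinuousLinearMap.comp _) z :=
    Complex.conjCLE.toContinuousLinearMap.hasFDerivAt.comp z Hg
  have Hch : HasFDerivAt (fun w => conj (h w))
      (Complex.conjCLE.toContinuousLinearMap.comp _) z :=
    Complex.conjCLE.toContinuousLinearMap.hasFDerivAt.comp z Hh
  have Hid : HasFDerivAt (fun w : ℂ => w) (ContinuousLinearMap.id ℝ ℂ) z := hasFDerivAt_id z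
  have Hmul := Hid.mul' Hcg
  have Htot := (Hf.add Hmul).add Hch
  have Hre' : HasFDerivAt (fun w => (f w + w * conj (g w) + conj (h w)).re)
      (Complex.reCLM.comp _) z := Complex.reCLM.hasFDerivAt.comp z Htot
  unfold pd
  rw [Hre'.fderiv]
  simp only [ContinuousLinearMap.comp_apply, ContinuousLinearMap.add_apply,
    ContinuousLinearMap.coe_smul', Pi.smul_apply, ContinuousLinearMap.smulRight_apply,
    ContinuousLinearMap.coe_restrictScalars', ContinuousLinearMap.id_apply,
    ContinuousLinearEquiv.coe_coe, Complex.conjCLE_apply,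
    ContinuousLinearMap.one_apply, smul_eq_mul, Complex.reCLM_apply, ContinuousLinearMap.coe_id',
    Complex.add_re, id_eq, op_smul_eq_mul]
  ring_nf

lemma pd_shape_on {V : Set ℂ} (hV : IsOpen V) {f g h f' g' h' : ℂ → ℂ}
    (hf : ∀ w ∈ V, HasDerivAt f (f' w) w) (hg : ∀ w ∈ V, HasDerivAt g (g' w) w)
    (hh : ∀ w ∈ V, HasDerivAt h (h' w) w)
    {u : ℂ → ℝ} (hu : ∀ w ∈ V, u w = (f w + w * conj (g w) + conj (h w)).re) (v : ℂ) :
    ∀ w ∈ V, pd v u w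
      = (f' w * v + w * conj (g' w * v) + conj (conj v * g w + h' w * v)).re := by
  intro w hw
  rw [pd_congrOn hV hu hw v, pd_shapeRe w v (hf w hw) (hg w hw) (hh w hw)]
  congr 1
  simp only [map_add, map_mul, Complex.conj_conj]
  ring


set_option maxHeartbeats 2000000 in
/-- **Kolosov–Muskhelishvili representation (converse direction).** If `φ, ψ` are analytic
on an open set `V ⊆ ℂ`, `μ > 0`, `k > 1` and `κ = 2μ/(k-1)`, then the displacement
`u = (u₁, u₂)` with `u₁ + i u₂ = (1/(2μ))(k φ(z) - z conj(φ'(z)) - conj(ψ(z)))` solves the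
two-dimensional isotropic Lamé system `μ Δu + κ ∇(div u) = 0` on `V`. -/
theorem kolosov_muskhelishvili_solves_lame
    (V : Set ℂ) (hV : IsOpen V)
    (φ ψ : ℂ → ℂ) (hφ : DifferentiableOn ℂ φ V) (hψ : DifferentiableOn ℂ ψ V)
    (μ k : ℝ) (hμ : 0 < μ) (hk : 1 < k)
    (κ : ℝ) (hκ : κ = 2 * μ / (k - 1))
    (u₁ u₂ : ℂ → ℝ)
    (hu : ∀ z ∈ V, (u₁ z : ℂ) + Complex.I * (u₂ z : ℂ) =
      (1 / (2 * (μ : ℂ))) * ((k : ℂ) * φ z - z * conj (deriv φ z) - conj (ψ z))) :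
    ∀ z ∈ V,
      μ * (pd 1 (pd 1 u₁) z + pd Complex.I (pd Complex.I u₁) z)
        + κ * pd 1 (fun w => pd 1 u₁ w + pd Complex.I u₂ w) z = 0 ∧
      μ * (pd 1 (pd 1 u₂) z + pd Complex.I (pd Complex.I u₂) z)
        + κ * pd Complex.I (fun w => pd 1 u₁ w + pd Complex.I u₂ w) z = 0 := by
  obtain ⟨c, hc⟩ : ∃ c : ℝ, c = 1 / (2 * μ) := ⟨_, rfl⟩
  have hφa : AnalyticOnNhd ℂ φ V := hφ.analyticOnNhd hV
  have hψa : AnalyticOnNhd ℂ ψ V := hψ.analyticOnNhd hV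
  have hφ1a : AnalyticOnNhd ℂ (deriv φ) V := hφa.deriv
  have hφ2a : AnalyticOnNhd ℂ (deriv (deriv φ)) V := hφ1a.deriv
  have hψ1a : AnalyticOnNhd ℂ (deriv ψ) V := hψa.deriv
  have Hφ : ∀ w ∈ V, HasDerivAt φ (deriv φ w) w :=
    fun w hw => (hφa w hw).differentiableAt.hasDerivAt
  have Hφ1 : ∀ w ∈ V, HasDerivAt (deriv φ) (deriv (deriv φ) w) w :=
    fun w hw => (hφ1a w hw).differentiableAt.hasDerivAt
  have Hφ2 : ∀ w ∈ V, HasDerivAt (deriv (deriv φ)) (deriv (deriv (deriv φ)) w) w :=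
    fun w hw => (hφ2a w hw).differentiableAt.hasDerivAt
  have Hψ : ∀ w ∈ V, HasDerivAt ψ (deriv ψ w) w :=
    fun w hw => (hψa w hw).differentiableAt.hasDerivAt
  have Hψ1 : ∀ w ∈ V, HasDerivAt (deriv ψ) (deriv (deriv ψ) w) w :=
    fun w hw => (hψ1a w hw).differentiableAt.hasDerivAt
  -- shape representation of u₁
  have hne : (2 * (μ:ℂ)) ≠ 0 := by simp [Complex.ofReal_ne_zero, hμ.ne']
  have huA : ∀ w ∈ V, u₁ w =
      ((c : ℂ) * (k : ℂ) * φ w + w * conj (-((c : ℂ) * deriv φ w)) + conj (-((c : ℂ) * ψ w))).re := by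
    intro w hw
    have key : ((c : ℂ) * (k : ℂ) * φ w + w * conj (-((c : ℂ) * deriv φ w)) + conj (-((c : ℂ) * ψ w)))
        = (1 / (2 * (μ : ℂ))) * ((k : ℂ) * φ w - w * conj (deriv φ w) - conj (ψ w)) := by
      simp only [map_neg, map_mul, Complex.conj_ofReal]
      rw [hc]
      push_cast
      field_simp
      ring
    rw [key, ← hu w hw]
    simp
  -- shape representation of u₂
  have huB : ∀ w ∈ V, u₂ w =
      (-(Complex.I * (c : ℂ) * (k : ℂ)) * φ w + w * conj (-(Complex.I * (c : ℂ)) * deriv φ w)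
        + conj (-(Complex.I * (c : ℂ)) * ψ w)).re := by
    intro w hw
    have key : (-(Complex.I * (c : ℂ) * (k : ℂ)) * φ w + w * conj (-(Complex.I * (c : ℂ)) * deriv φ w)
        + conj (-(Complex.I * (c : ℂ)) * ψ w))
        = -Complex.I * ((1 / (2 * (μ : ℂ))) * ((k : ℂ) * φ w - w * conj (deriv φ w) - conj (ψ w))) := by
      simp only [map_neg, map_mul, Complex.conj_ofReal, Complex.conj_I]
      rw [hc]
      push_cast
      field_simp
      ring
    rw [key, ← hu w hw]
    simp
  -- level-1 derivative families for triple A (u₁)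
  have HfA : ∀ w ∈ V, HasDerivAt (fun w => (c:ℂ) * (k:ℂ) * φ w) ((c:ℂ) * (k:ℂ) * deriv φ w) w :=
    fun w hw => HasDerivAt.const_mul _ (Hφ w hw)
  have HgA : ∀ w ∈ V, HasDerivAt (fun w => -((c:ℂ) * deriv φ w)) (-((c:ℂ) * deriv (deriv φ) w)) w :=
    fun w hw => (HasDerivAt.const_mul _ (Hφ1 w hw)).neg
  have HhA : ∀ w ∈ V, HasDerivAt (fun w => -((c:ℂ) * ψ w)) (-((c:ℂ) * deriv ψ w)) w :=
    fun w hw => (HasDerivAt.const_mul _ (Hψ w hw)).neg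
  have L1a := pd_shape_on hV HfA HgA HhA huA 1
  have L1b := pd_shape_on hV HfA HgA HhA huA Complex.I
  -- level-1 derivative families for triple B (u₂)
  have HfB : ∀ w ∈ V, HasDerivAt (fun w => -(Complex.I * (c:ℂ) * (k:ℂ)) * φ w)
      (-(Complex.I * (c:ℂ) * (k:ℂ)) * deriv φ w) w :=
    fun w hw => HasDerivAt.const_mul _ (Hφ w hw)
  have HgB : ∀ w ∈ V, HasDerivAt (fun w => -(Complex.I * (c:ℂ)) * deriv φ w)
      (-(Complex.I * (c:ℂ)) * deriv (deriv φ) w) w :=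
    fun w hw => HasDerivAt.const_mul _ (Hφ1 w hw)
  have HhB : ∀ w ∈ V, HasDerivAt (fun w => -(Complex.I * (c:ℂ)) * ψ w)
      (-(Complex.I * (c:ℂ)) * deriv ψ w) w :=
    fun w hw => HasDerivAt.const_mul _ (Hψ w hw)
  have L1c := pd_shape_on hV HfB HgB HhB huB 1
  have L1d := pd_shape_on hV HfB HgB HhB huB Complex.I
  -- level-2 derivative families
  have HFa : ∀ w ∈ V, HasDerivAt (fun w => (c:ℂ) * (k:ℂ) * deriv φ w * 1)
      ((c:ℂ) * (k:ℂ) * deriv (deriv φ) w * 1) w :=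
    fun w hw => (HasDerivAt.const_mul _ (Hφ1 w hw)).mul_const 1
  have HGa : ∀ w ∈ V, HasDerivAt (fun w => -((c:ℂ) * deriv (deriv φ) w) * 1)
      (-((c:ℂ) * deriv (deriv (deriv φ)) w) * 1) w :=
    fun w hw => ((HasDerivAt.const_mul _ (Hφ2 w hw)).neg).mul_const 1
  have HHa : ∀ w ∈ V, HasDerivAt
      (fun w => conj (1:ℂ) * -((c:ℂ) * deriv φ w) + -((c:ℂ) * deriv ψ w) * 1)
      (conj (1:ℂ) * -((c:ℂ) * deriv (deriv φ) w) + -((c:ℂ) * deriv (deriv ψ) w) * 1) w :=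
    fun w hw => (((HasDerivAt.const_mul _ (Hφ1 w hw)).neg).const_mul _).add
      (((HasDerivAt.const_mul _ (Hψ1 w hw)).neg).mul_const 1)
  have HFb : ∀ w ∈ V, HasDerivAt (fun w => (c:ℂ) * (k:ℂ) * deriv φ w * Complex.I)
      ((c:ℂ) * (k:ℂ) * deriv (deriv φ) w * Complex.I) w :=
    fun w hw => (HasDerivAt.const_mul _ (Hφ1 w hw)).mul_const _
  have HGb : ∀ w ∈ V, HasDerivAt (fun w => -((c:ℂ) * deriv (deriv φ) w) * Complex.I)
      (-((c:ℂ) * deriv (deriv (deriv φ)) w) * Complex.I) w :=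
    fun w hw => ((HasDerivAt.const_mul _ (Hφ2 w hw)).neg).mul_const _
  have HHb : ∀ w ∈ V, HasDerivAt
      (fun w => conj Complex.I * -((c:ℂ) * deriv φ w) + -((c:ℂ) * deriv ψ w) * Complex.I)
      (conj Complex.I * -((c:ℂ) * deriv (deriv φ) w) + -((c:ℂ) * deriv (deriv ψ) w) * Complex.I) w :=
    fun w hw => (((HasDerivAt.const_mul _ (Hφ1 w hw)).neg).const_mul _).add
      (((HasDerivAt.const_mul _ (Hψ1 w hw)).neg).mul_const _)
  have HFc : ∀ w ∈ V, HasDerivAt (fun w => -(Complex.I * (c:ℂ) * (k:ℂ)) * deriv φ w * 1)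
      (-(Complex.I * (c:ℂ) * (k:ℂ)) * deriv (deriv φ) w * 1) w :=
    fun w hw => (HasDerivAt.const_mul _ (Hφ1 w hw)).mul_const 1
  have HGc : ∀ w ∈ V, HasDerivAt (fun w => -(Complex.I * (c:ℂ)) * deriv (deriv φ) w * 1)
      (-(Complex.I * (c:ℂ)) * deriv (deriv (deriv φ)) w * 1) w :=
    fun w hw => (HasDerivAt.const_mul _ (Hφ2 w hw)).mul_const 1
  have HHc : ∀ w ∈ V, HasDerivAt
      (fun w => conj (1:ℂ) * (-(Complex.I * (c:ℂ)) * deriv φ w) + -(Complex.I * (c:ℂ)) * deriv ψ w * 1)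
      (conj (1:ℂ) * (-(Complex.I * (c:ℂ)) * deriv (deriv φ) w)
        + -(Complex.I * (c:ℂ)) * deriv (deriv ψ) w * 1) w :=
    fun w hw => ((HasDerivAt.const_mul _ (Hφ1 w hw)).const_mul _).add
      ((HasDerivAt.const_mul _ (Hψ1 w hw)).mul_const 1)
  have HFd : ∀ w ∈ V, HasDerivAt (fun w => -(Complex.I * (c:ℂ) * (k:ℂ)) * deriv φ w * Complex.I)
      (-(Complex.I * (c:ℂ) * (k:ℂ)) * deriv (deriv φ) w * Complex.I) w :=
    fun w hw => (HasDerivAt.const_mul _ (Hφ1 w hw)).mul_const _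
  have HGd : ∀ w ∈ V, HasDerivAt (fun w => -(Complex.I * (c:ℂ)) * deriv (deriv φ) w * Complex.I)
      (-(Complex.I * (c:ℂ)) * deriv (deriv (deriv φ)) w * Complex.I) w :=
    fun w hw => (HasDerivAt.const_mul _ (Hφ2 w hw)).mul_const _
  have HHd : ∀ w ∈ V, HasDerivAt
      (fun w => conj Complex.I * (-(Complex.I * (c:ℂ)) * deriv φ w)
        + -(Complex.I * (c:ℂ)) * deriv ψ w * Complex.I)
      (conj Complex.I * (-(Complex.I * (c:ℂ)) * deriv (deriv φ) w)
        + -(Complex.I * (c:ℂ)) * deriv (deriv ψ) w * Complex.I) w :=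
    fun w hw => ((HasDerivAt.const_mul _ (Hφ1 w hw)).const_mul _).add
      ((HasDerivAt.const_mul _ (Hψ1 w hw)).mul_const _)
  -- second derivatives
  have L2a := pd_shape_on (u := pd 1 u₁) hV HFa HGa HHa L1a 1
  have L2b := pd_shape_on (u := pd Complex.I u₁) hV HFb HGb HHb L1b Complex.I
  have L2c := pd_shape_on (u := pd 1 u₂) hV HFc HGc HHc L1c 1
  have L2d := pd_shape_on (u := pd Complex.I u₂) hV HFd HGd HHd L1d Complex.I
  -- divergence
  have hs : ∀ w ∈ V, pd 1 u₁ w + pd Complex.I u₂ w =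
      (((c:ℂ) * (k:ℂ) * deriv φ w * 1 + -(Complex.I * (c:ℂ) * (k:ℂ)) * deriv φ w * Complex.I)
        + w * conj (-((c:ℂ) * deriv (deriv φ) w) * 1
            + -(Complex.I * (c:ℂ)) * deriv (deriv φ) w * Complex.I)
        + conj ((conj (1:ℂ) * -((c:ℂ) * deriv φ w) + -((c:ℂ) * deriv ψ w) * 1)
            + (conj Complex.I * (-(Complex.I * (c:ℂ)) * deriv φ w)
              + -(Complex.I * (c:ℂ)) * deriv ψ w * Complex.I))).re := by
    intro w hw
    rw [L1a w hw, L1d w hw, ← Complex.add_re]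
    congr 1
    simp only [map_add]
    ring
  have HFs : ∀ w ∈ V, HasDerivAt
      (fun w => (c:ℂ) * (k:ℂ) * deriv φ w * 1 + -(Complex.I * (c:ℂ) * (k:ℂ)) * deriv φ w * Complex.I)
      ((c:ℂ) * (k:ℂ) * deriv (deriv φ) w * 1
        + -(Complex.I * (c:ℂ) * (k:ℂ)) * deriv (deriv φ) w * Complex.I) w :=
    fun w hw => (HFa w hw).add (HFd w hw)
  have HGs : ∀ w ∈ V, HasDerivAt
      (fun w => -((c:ℂ) * deriv (deriv φ) w) * 1 + -(Complex.I * (c:ℂ)) * deriv (deriv φ) w * Complex.I)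
      (-((c:ℂ) * deriv (deriv (deriv φ)) w) * 1
        + -(Complex.I * (c:ℂ)) * deriv (deriv (deriv φ)) w * Complex.I) w :=
    fun w hw => (HGa w hw).add (HGd w hw)
  have HHs : ∀ w ∈ V, HasDerivAt
      (fun w => (conj (1:ℂ) * -((c:ℂ) * deriv φ w) + -((c:ℂ) * deriv ψ w) * 1)
        + (conj Complex.I * (-(Complex.I * (c:ℂ)) * deriv φ w)
          + -(Complex.I * (c:ℂ)) * deriv ψ w * Complex.I))
      ((conj (1:ℂ) * -((c:ℂ) * deriv (deriv φ) w) + -((c:ℂ) * deriv (deriv ψ) w) * 1)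
        + (conj Complex.I * (-(Complex.I * (c:ℂ)) * deriv (deriv φ) w)
          + -(Complex.I * (c:ℂ)) * deriv (deriv ψ) w * Complex.I)) w :=
    fun w hw => (HHa w hw).add (HHd w hw)
  have L2s := pd_shape_on (u := fun w => pd 1 u₁ w + pd Complex.I u₂ w) hV HFs HGs HHs hs
  intro z hz
  have e1 := L2a z hz
  have e2 := L2b z hz
  have e3 := L2c z hz
  have e4 := L2d z hz
  have e5 := L2s 1 z hz
  have e6 := L2s Complex.I z hz
  rw [hκ]
  constructor
  · rw [e1, e2, e5]
    simp only [Complex.add_re, Complex.add_im, Complex.neg_re, Complex.neg_im,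
      Complex.mul_re, Complex.mul_im, Complex.conj_re, Complex.conj_im,
      Complex.ofReal_re, Complex.ofReal_im, Complex.one_re, Complex.one_im,
      Complex.I_re, Complex.I_im]
    rw [hc]
    have h1 : μ ≠ 0 := hμ.ne'
    have h2 : k - 1 ≠ 0 := sub_ne_zero.mpr hk.ne'
    field_simp
    ring
  · rw [e3, e4, e6]
    simp only [Complex.add_re, Complex.add_im, Complex.neg_re, Complex.neg_im,
      Complex.mul_re, Complex.mul_im, Complex.conj_re, Complex.conj_im,
      Complex.ofReal_re, Complex.ofReal_im, Complex.one_re, Complex.one_im,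
      Complex.I_re, Complex.I_im]
    rw [hc]
    have h1 : μ ≠ 0 := hμ.ne'
    have h2 : k - 1 ≠ 0 := sub_ne_zero.mpr hk.ne'
    field_simp
    ring
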